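/- Fix d ≥ 1 and ψ_S ∈ ℂ^d of Euclidean norm 1. Let (M_j)_{j≥1} be a sequence in M_d(ℂ) with M_j ψ_S = ψ_S for all j, and suppose C_0 := sup { ‖M_{j_n} ⋯ M_{j_1}‖ : n ∈ ℕ*, j_k ∈ ℕ* } is finite (Euclidean operator norm). For each j, the Cesàro limit ψ_j := lim_{N→∞} (1/N) Σ_{k=0}^{N−1} (M_j^*)^k ψ_S exists; set P_j := |ψ_S⟩⟨ψ_j|, Q_j := I − P_j, M_{Q_j} := Q_j M_j Q_j, Ψ_n := M_1 ⋯ M_n and θ_n := M_n^* ⋯ M_2^* ψ_1. Then: (1) ‖Ψ_n‖ ≤ C_0 for all n; (2) ‖P_j‖ = ‖ψ_j‖ ≤ C_0 and ‖Q_j‖ ≤ 1 + C_0 for all j; (3) sup { ‖M_{Q_{j_n}} M_{Q_{j_{n−1}}} ⋯ M_{Q_{j_1}}‖ : n ∈ ℕ*, j_k ∈ ℕ* } ≤ C_0 (1 + C_0); (4) ‖θ_n‖ ≤ C_0² for all n. -/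

import Mathlib

open scoped BigOperators
open MeasureTheory Filter ContinuousLinearMap

noncomputable section

abbrev Evec (d : ℕ) := EuclideanSpace ℂ (Fin d)
abbrev Op (d : ℕ) := Evec d →L[ℂ] Evec d

/-- `ketBra u v = |u⟩⟨v|`, the rank-one operator `x ↦ ⟪v, x⟫ • u`. -/
def ketBra {d : ℕ} (u v : Evec d) : Op d := (innerSL ℂ v).smulRight u

lemma ketBra_apply {d : ℕ} (u v x : Evec d) :
    ketBra u v x = (inner ℂ v x : ℂ) • u := rfl

lemma adjoint_mul {d : ℕ} (A B : Op d) :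
    adjoint (A * B) = adjoint B * adjoint A := by
  rw [ContinuousLinearMap.mul_def, adjoint_comp, ContinuousLinearMap.mul_def]

lemma adjoint_pow {d : ℕ} (A : Op d) (k : ℕ) :
    adjoint A ^ k = adjoint (A ^ k) := by
  induction k with
  | zero => simp [ContinuousLinearMap.one_def, ContinuousLinearMap.adjoint_id]
  | succ k ih => rw [pow_succ, ih, ← adjoint_mul, ← pow_succ']

lemma adjoint_list_prod {d : ℕ} (l : List (Op d)) :
    (l.map adjoint).prod = adjoint l.reverse.prod := by
  induction l with
  | nil => simp [ContinuousLinearMap.one_def, ContinuousLinearMap.adjoint_id]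
  | cons a l ih =>
      rw [List.map_cons, List.prod_cons, ih, List.reverse_cons, List.prod_append,
        List.prod_cons, List.prod_nil, mul_one, adjoint_mul]

lemma mean_ergodic {d : ℕ} (T : Op d) (C : ℝ) (hC : ∀ k : ℕ, ‖T ^ k‖ ≤ C) (x : Evec d) :
    ∃ u : Evec d, Tendsto (fun N : ℕ => (N : ℂ)⁻¹ • ∑ k ∈ Finset.range N, (T ^ k) x)
      atTop (nhds u) := by
  set g : Evec d →ₗ[ℂ] Evec d := ((T - 1 : Op d) : Evec d →ₗ[ℂ] Evec d) with hg
  have hgapply : ∀ w, g w = T w - w := fun w => by simp [hg]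
  have hzero : ∀ w : Evec d,
      Tendsto (fun N : ℕ => (N : ℂ)⁻¹ • ((T ^ N) w - w)) atTop (nhds 0) := by
    intro w
    apply squeeze_zero_norm (a := fun N : ℕ => (C * ‖w‖ + ‖w‖) * (1 / (N : ℝ)))
    · intro N
      rw [norm_smul]
      have h1 : ‖((N : ℕ) : ℂ)⁻¹‖ = 1 / (N : ℝ) := by
        rw [norm_inv]; simp [one_div]
      rw [h1, mul_comm]
      apply mul_le_mul_of_nonneg_right ?_ (by positivity)
      calc ‖(T ^ N) w - w‖ ≤ ‖(T ^ N) w‖ + ‖w‖ := norm_sub_le _ _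
        _ ≤ C * ‖w‖ + ‖w‖ := by
            have h2 := (T ^ N).le_opNorm w
            have h3 := hC N
            nlinarith [norm_nonneg w]
    · simpa using (tendsto_one_div_atTop_nhds_zero_nat.const_mul (C * ‖w‖ + ‖w‖))
  have hsumtel : ∀ (w : Evec d) (N : ℕ),
      ∑ k ∈ Finset.range N, (T ^ k) (g w) = (T ^ N) w - w := by
    intro w N
    have h2 := congrArg (fun A : Op d => A w) (geom_sum_mul T N)
    simp only [ContinuousLinearMap.mul_apply, ContinuousLinearMap.sub_apply,
      ContinuousLinearMap.one_apply, ContinuousLinearMap.sum_apply] at h2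
    simp only [hgapply]
    exact h2
  have hdisj : Disjoint (LinearMap.ker g) (LinearMap.range g) := by
    rw [Submodule.disjoint_def]
    intro v hv1 hv2
    obtain ⟨w, hw⟩ := hv2
    have hTv : T v = v := by
      have h := hgapply v
      rw [LinearMap.mem_ker.mp hv1] at h
      have := h.symm
      rwa [sub_eq_zero] at this
    have hTk : ∀ k : ℕ, (T ^ k) v = v := by
      intro k; induction k with
      | zero => simp
      | succ k ih => rw [pow_succ, ContinuousLinearMap.mul_apply, hTv, ih]
    have key : ∀ N : ℕ, (N : ℂ) • v = (T ^ N) w - w := by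
      intro N
      have h2 := hsumtel w N
      rw [hw] at h2
      simp only [hTk] at h2
      rw [Finset.sum_const, Finset.card_range] at h2
      rw [Nat.cast_smul_eq_nsmul]
      exact h2
    have hev : ∀ᶠ N : ℕ in atTop, (N : ℂ)⁻¹ • ((T ^ N) w - w) = v := by
      filter_upwards [eventually_ge_atTop 1] with N hN
      have hNne : ((N : ℕ) : ℂ) ≠ 0 := by
        exact_mod_cast Nat.one_le_iff_ne_zero.mp hN
      rw [← key N, smul_smul, inv_mul_cancel₀ hNne, one_smul]
    exact tendsto_nhds_unique tendsto_const_nhds ((hzero w).congr' hev)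
  have htop : LinearMap.ker g ⊔ LinearMap.range g = ⊤ := by
    apply Submodule.eq_top_of_finrank_eq
    have h1 := Submodule.finrank_sup_add_finrank_inf_eq (LinearMap.ker g) (LinearMap.range g)
    have h2 := LinearMap.finrank_range_add_finrank_ker g
    rw [hdisj.eq_bot, finrank_bot] at h1
    omega
  obtain ⟨u, hu, z, hz, hx⟩ := Submodule.mem_sup.mp (htop ▸ Submodule.mem_top : x ∈ _)
  obtain ⟨w, hw⟩ := hz
  have hTu : T u = u := by
    have h := hgapply u
    rw [LinearMap.mem_ker.mp hu] at h
    have := h.symm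
    rwa [sub_eq_zero] at this
  have hTku : ∀ k : ℕ, (T ^ k) u = u := by
    intro k; induction k with
    | zero => simp
    | succ k ih => rw [pow_succ, ContinuousLinearMap.mul_apply, hTu, ih]
  refine ⟨u, ?_⟩
  have heq : ∀ᶠ N : ℕ in atTop,
      u + (N : ℂ)⁻¹ • ((T ^ N) w - w)
        = (N : ℂ)⁻¹ • ∑ k ∈ Finset.range N, (T ^ k) x := by
    filter_upwards [eventually_ge_atTop 1] with N hN
    have hNne : ((N : ℕ) : ℂ) ≠ 0 := by
      exact_mod_cast Nat.one_le_iff_ne_zero.mp hN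
    have hsplit : ∑ k ∈ Finset.range N, (T ^ k) x
        = (N : ℂ) • u + ((T ^ N) w - w) := by
      have hterm : ∀ k ∈ Finset.range N, (T ^ k) x = u + (T ^ k) (g w) := by
        intro k _
        rw [← hx, ← hw]
        simp [map_add, hTku]
      rw [Finset.sum_congr rfl hterm, Finset.sum_add_distrib, Finset.sum_const,
        Finset.card_range, hsumtel, Nat.cast_smul_eq_nsmul]
    rw [hsplit, smul_add, smul_smul, inv_mul_cancel₀ hNne, one_smul]
  have hlim : Tendsto (fun N : ℕ => u + (N : ℂ)⁻¹ • ((T ^ N) w - w)) atTop (nhds u) := by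
    simpa using (hzero w).const_add u
  exact hlim.congr' heq


set_option maxHeartbeats 1000000 in
/-- uniform bounds. The sequence `(M_j)_{j≥1}` of the paper is indexed here by
`j : ℕ`.  Under the uniform bound `C₀` on all finite products, the Cesàro limits
`ψ_j = lim (1/N) Σ_{k<N} (M_j^*)^k ψ_S` exist, and with `P_j = |ψ_S⟩⟨ψ_j|`, `Q_j = 1 - P_j`,
`M_{Q_j} = Q_j M_j Q_j`, `Ψ_n = M_1 ⋯ M_n`, `θ_n = M_n^* ⋯ M_2^* ψ_1`:
(1) `‖Ψ_n‖ ≤ C₀`; (2) `‖P_j‖ = ‖ψ_j‖ ≤ C₀`, `‖Q_j‖ ≤ 1 + C₀`;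
(3) products of the `M_{Q_j}` are bounded by `C₀(1+C₀)`; (4) `‖θ_n‖ ≤ C₀²`. -/
theorem stmt4 {d : ℕ} (hd : 1 ≤ d) (ψS : Evec d) (hψS : ‖ψS‖ = 1)
    (M : ℕ → Op d) (hfix : ∀ j, M j ψS = ψS)
    (C₀ : ℝ)
    (hC₀ : ∀ (n : ℕ), 1 ≤ n → ∀ j : Fin n → ℕ,
      ‖(List.ofFn fun i => M (j i)).prod‖ ≤ C₀) :
    ∃ ψ : ℕ → Evec d,
      (∀ j : ℕ, Tendsto
        (fun N : ℕ => (N : ℂ)⁻¹ • ∑ k ∈ Finset.range N, (adjoint (M j) ^ k) ψS)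
        atTop (nhds (ψ j))) ∧
      (∀ (n : ℕ), 1 ≤ n → ‖(List.ofFn fun i : Fin n => M i).prod‖ ≤ C₀) ∧
      (∀ j : ℕ, ‖ketBra ψS (ψ j)‖ = ‖ψ j‖ ∧ ‖ψ j‖ ≤ C₀ ∧
        ‖1 - ketBra ψS (ψ j)‖ ≤ 1 + C₀) ∧
      (∀ (n : ℕ), 1 ≤ n → ∀ j : Fin n → ℕ,
        ‖(List.ofFn fun i =>
            (1 - ketBra ψS (ψ (j i))) * M (j i) * (1 - ketBra ψS (ψ (j i)))).prod‖
          ≤ C₀ * (1 + C₀)) ∧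
      (∀ (n : ℕ), 1 ≤ n →
        ‖((List.ofFn fun i : Fin (n - 1) => adjoint (M (n - 1 - i))).prod) (ψ 0)‖ ≤ C₀ ^ 2) := by
  haveI : Nontrivial (Evec d) :=
    nontrivial_of_ne ψS 0 (fun h => by rw [h, norm_zero] at hψS; norm_num at hψS)
  -- C₀ ≥ 1
  have hC1 : (1 : ℝ) ≤ C₀ := by
    have h0 : ‖(List.ofFn fun i : Fin 1 => M ((fun _ => 0) i)).prod‖ ≤ C₀ :=
      hC₀ 1 le_rfl (fun _ => 0)
    simp only [List.ofFn_succ, List.ofFn_zero, List.prod_cons, List.prod_nil, mul_one] at h0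
    have h1 : (1 : ℝ) ≤ ‖M 0‖ := by
      have := (M 0).le_opNorm ψS
      rw [hfix 0, hψS, mul_one] at this
      linarith
    linarith
  have hC0nn : (0 : ℝ) ≤ C₀ := by linarith
  -- powers of M j fix ψS
  have hpowfix : ∀ j k, ((M j) ^ k) ψS = ψS := by
    intro j k
    induction k with
    | zero => simp
    | succ k ih => rw [pow_succ, ContinuousLinearMap.mul_apply, hfix, ih]
  -- norm bound on list products
  have hList : ∀ l : List ℕ, 1 ≤ l.length → ‖(l.map M).prod‖ ≤ C₀ := by
    intro l hl
    have h := hC₀ l.length hl (fun i => l.get i)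
    have he : (List.ofFn fun i => M (l.get i)) = l.map M := by
      rw [show (List.ofFn fun i => M (l.get i)) = (List.ofFn l.get).map M from
        by rw [List.map_ofFn]; rfl, List.ofFn_get]
    rwa [he] at h
  -- norm bound on powers
  have hMpow : ∀ j k, ‖(M j) ^ k‖ ≤ C₀ := by
    intro j k
    cases k with
    | zero => simpa using hC1
    | succ k =>
        have h := hC₀ (k + 1) (Nat.le_add_left 1 k) (fun _ => j)
        rwa [List.ofFn_const, List.prod_replicate] at h
  have hTpow : ∀ j k, ‖adjoint (M j) ^ k‖ ≤ C₀ := by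
    intro j k
    rw [adjoint_pow, ContinuousLinearMap.adjoint.norm_map]
    exact hMpow j k
  -- define ψ via the mean ergodic theorem
  have hex : ∀ j : ℕ, ∃ u : Evec d, Tendsto
      (fun N : ℕ => (N : ℂ)⁻¹ • ∑ k ∈ Finset.range N, (adjoint (M j) ^ k) ψS)
      atTop (nhds u) := fun j => mean_ergodic (adjoint (M j)) C₀ (hTpow j) ψS
  choose ψ hψ using hex
  -- inner products with ψS
  have hinner : ∀ j, (inner ℂ (ψ j) ψS : ℂ) = 1 := by
    intro j
    have h1 : Tendsto (fun N : ℕ =>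
        (inner ℂ ((N : ℂ)⁻¹ • ∑ k ∈ Finset.range N, (adjoint (M j) ^ k) ψS) ψS : ℂ))
        atTop (nhds (inner ℂ (ψ j) ψS)) := (hψ j).inner tendsto_const_nhds
    have h2 : ∀ᶠ N : ℕ in atTop,
        (inner ℂ ((N : ℂ)⁻¹ • ∑ k ∈ Finset.range N, (adjoint (M j) ^ k) ψS) ψS : ℂ) = 1 := by
      filter_upwards [eventually_ge_atTop 1] with N hN
      have hNne : ((N : ℕ) : ℂ) ≠ 0 := by
        exact_mod_cast Nat.one_le_iff_ne_zero.mp hN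
      have hterm : ∀ k ∈ Finset.range N,
          (inner ℂ ((adjoint (M j) ^ k) ψS) ψS : ℂ) = 1 := by
        intro k _
        rw [adjoint_pow, adjoint_inner_left, hpowfix, inner_self_eq_norm_sq_to_K, hψS]
        norm_num
      rw [inner_smul_left, sum_inner, Finset.sum_congr rfl hterm, Finset.sum_const,
        Finset.card_range, nsmul_eq_mul, mul_one]
      simp [hNne]
    exact tendsto_nhds_unique (h1.congr' h2) tendsto_const_nhds
  -- norm bound on ψ j
  have hnormψ : ∀ j, ‖ψ j‖ ≤ C₀ := by
    intro j
    apply le_of_tendsto (hψ j).norm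
    filter_upwards [eventually_ge_atTop 1] with N hN
    have hNpos : (0 : ℝ) < (N : ℝ) := by exact_mod_cast hN
    have hsum : ‖∑ k ∈ Finset.range N, (adjoint (M j) ^ k) ψS‖ ≤ (N : ℝ) * C₀ := by
      calc ‖∑ k ∈ Finset.range N, (adjoint (M j) ^ k) ψS‖
          ≤ ∑ k ∈ Finset.range N, ‖(adjoint (M j) ^ k) ψS‖ := norm_sum_le _ _
        _ ≤ ∑ _k ∈ Finset.range N, C₀ := by
            apply Finset.sum_le_sum
            intro k _
            calc ‖(adjoint (M j) ^ k) ψS‖ ≤ ‖adjoint (M j) ^ k‖ * ‖ψS‖ :=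
                  (adjoint (M j) ^ k).le_opNorm ψS
              _ = ‖adjoint (M j) ^ k‖ := by rw [hψS, mul_one]
              _ ≤ C₀ := hTpow j k
        _ = (N : ℝ) * C₀ := by rw [Finset.sum_const, Finset.card_range, nsmul_eq_mul]
    rw [norm_smul, norm_inv]
    have hnc : ‖((N : ℕ) : ℂ)‖ = (N : ℝ) := by simp
    rw [hnc]
    calc (N : ℝ)⁻¹ * ‖∑ k ∈ Finset.range N, (adjoint (M j) ^ k) ψS‖
        ≤ (N : ℝ)⁻¹ * ((N : ℝ) * C₀) := by
          apply mul_le_mul_of_nonneg_left hsum (by positivity)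
      _ = C₀ := by field_simp
  -- ketBra norm
  have hkbnorm : ∀ v : Evec d, ‖ketBra ψS v‖ = ‖v‖ := by
    intro v
    rw [ketBra, ContinuousLinearMap.norm_smulRight_apply, innerSL_apply_norm, hψS, mul_one]
  -- abbreviation
  set P : ℕ → Op d := fun j => ketBra ψS (ψ j) with hP
  have hPψS : ∀ a, P a ψS = ψS := by
    intro a
    rw [hP]
    simp only [ketBra_apply, hinner a, one_smul]
  have hMP : ∀ a b, M a * P b = P b := by
    intro a b
    refine ContinuousLinearMap.ext fun x => ?_
    simp only [ContinuousLinearMap.mul_apply, hP, ketBra_apply, _root_.map_smul, hfix]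
  have hPP : ∀ a b, P a * P b = P b := by
    intro a b
    refine ContinuousLinearMap.ext fun x => ?_
    simp only [ContinuousLinearMap.mul_apply, hP, ketBra_apply, inner_smul_right,
      hinner, mul_one]
  have hQP : ∀ a b, (1 - P a) * P b = 0 := by
    intro a b
    rw [sub_mul, one_mul, hPP, sub_self]
  have hQQ : ∀ a b, (1 - P a) * (1 - P b) = 1 - P a := by
    intro a b
    rw [mul_sub, mul_one, hQP, sub_zero]
  have hQMQ : ∀ a b, (1 - P a) * M a * (1 - P b) = (1 - P a) * M a := by
    intro a b
    have h : (1 - P a) * M a * P b = 0 := by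
      rw [mul_assoc, hMP, hQP]
    rw [mul_sub, mul_one, h, sub_zero]
  have hstep : ∀ a b (B : Op d),
      ((1 - P a) * M a * (1 - P a)) * ((1 - P b) * B) = (1 - P a) * (M a * B) := by
    intro a b B
    rw [hQMQ, ← mul_assoc, hQMQ, mul_assoc]
  have hone : ‖(1 : Op d)‖ = 1 := by
    rw [ContinuousLinearMap.one_def, ContinuousLinearMap.norm_id]
  have hQnorm : ∀ a, ‖1 - P a‖ ≤ 1 + C₀ := by
    intro a
    calc ‖1 - P a‖ ≤ ‖(1 : Op d)‖ + ‖P a‖ := norm_sub_le _ _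
      _ = 1 + ‖ψ a‖ := by rw [hone, hP]; simp only; rw [hkbnorm]
      _ ≤ 1 + C₀ := by linarith [hnormψ a]
  -- the product identity
  have prodQ : ∀ (n : ℕ) (j : Fin (n + 1) → ℕ),
      (List.ofFn fun i => (1 - P (j i)) * M (j i) * (1 - P (j i))).prod
        = (1 - P (j 0)) * (List.ofFn fun i => M (j i)).prod := by
    intro n
    induction n with
    | zero =>
        intro j
        simp only [List.ofFn_succ, List.ofFn_zero, List.prod_cons, List.prod_nil, mul_one]
        exact hQMQ (j 0) (j 0)
    | succ n ih =>
        intro j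
        rw [List.ofFn_succ, List.prod_cons, ih (fun i => j i.succ)]
        rw [show (List.ofFn fun i : Fin (n + 1 + 1) => M (j i)).prod
            = M (j 0) * (List.ofFn fun i : Fin (n + 1) => M (j i.succ)).prod from by
          rw [List.ofFn_succ, List.prod_cons]]
        exact hstep (j 0) (j (Fin.succ 0)) _
  refine ⟨ψ, hψ, ?_, ?_, ?_, ?_⟩
  · -- part 1
    intro n hn
    exact hC₀ n hn (fun i => (i : ℕ))
  · -- part 2
    intro j
    exact ⟨hkbnorm (ψ j), hnormψ j, hQnorm j⟩
  · -- part 3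
    intro n hn j
    obtain ⟨m, rfl⟩ : ∃ m, n = m + 1 := ⟨n - 1, (Nat.succ_pred_eq_of_pos hn).symm⟩
    rw [show (List.ofFn fun i =>
        (1 - ketBra ψS (ψ (j i))) * M (j i) * (1 - ketBra ψS (ψ (j i)))).prod
        = (1 - P (j 0)) * (List.ofFn fun i => M (j i)).prod from prodQ m j]
    calc ‖(1 - P (j 0)) * (List.ofFn fun i => M (j i)).prod‖
        ≤ ‖1 - P (j 0)‖ * ‖(List.ofFn fun i => M (j i)).prod‖ := norm_mul_le _ _
      _ ≤ (1 + C₀) * C₀ :=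
          mul_le_mul (hQnorm (j 0)) (hC₀ (m + 1) (Nat.le_add_left 1 m) j) (norm_nonneg _)
            (by linarith)
      _ = C₀ * (1 + C₀) := mul_comm _ _
  · -- part 4
    intro n hn
    rcases eq_or_lt_of_le hn with h1 | h2
    · -- n = 1
      subst h1
      simp only [Nat.sub_self, List.ofFn_zero, List.prod_nil, ContinuousLinearMap.one_apply]
      calc ‖ψ 0‖ ≤ C₀ := hnormψ 0
        _ ≤ C₀ ^ 2 := by nlinarith
    · -- n ≥ 2
      set m := n - 1 with hm
      have hm1 : 1 ≤ m := by omega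
      have hA : ‖(List.ofFn fun i : Fin m => adjoint (M (n - 1 - (i : ℕ)))).prod‖ ≤ C₀ := by
        have he1 : (List.ofFn fun i : Fin m => adjoint (M (n - 1 - (i : ℕ))))
            = ((List.ofFn fun i : Fin m => (n - 1 - (i : ℕ))).map M).map adjoint := by
          rw [List.map_ofFn, List.map_ofFn]; rfl
        rw [he1, adjoint_list_prod, ContinuousLinearMap.adjoint.norm_map,
          ← List.map_reverse]
        apply hList
        simpa using hm1
      calc ‖((List.ofFn fun i : Fin (n - 1) => adjoint (M (n - 1 - (i : ℕ)))).prod) (ψ 0)‖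
          ≤ ‖(List.ofFn fun i : Fin (n - 1) => adjoint (M (n - 1 - (i : ℕ)))).prod‖ * ‖ψ 0‖ :=
            ContinuousLinearMap.le_opNorm _ _
        _ ≤ C₀ * C₀ := mul_le_mul hA (hnormψ 0) (norm_nonneg _) hC0nn
        _ = C₀ ^ 2 := (sq C₀).symm
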